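/- Let D be the Wasserstein divergence, let Σ̂ ∈ 𝕊₊ᵖ have eigenvalues x̂₁ ≤ … ≤ x̂_p and eigendecomposition Σ̂ = V̂ Diag(x̂) V̂ᵀ, and let ε ∈ (0, Tr(Σ̂)). Then the primal problem (CSE) is uniquely solved by X* = V̂ Diag(x*) V̂ᵀ with x*_i = s(γ*, x̂_i), where the eigenvalue map is s(γ,b) = ( t^{1/3} − (γ/6)·t^{−1/3} )² with t = (γ/4)(√b + √(b + 2γ/27)) (for γ,b > 0 this is the unique positive a with 2a + γ(1 − √(b/a)) = 0, and it lies in (0,b)), and the inverse shrinkage intensity γ* is the unique positive solution of ε − Σ_{i=1}^p (√x̂_i − √(s(γ*, x̂_i)))² = 0; moreover γ* ≤ γ_W := 2√(p·x̂_p³/ε). -/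

import Mathlib

open Matrix Set Filter MeasureTheory
open scoped BigOperators Classical

noncomputable section

/-- The space of real `p × p` matrices. -/
abbrev Mat (p : ℕ) := Matrix (Fin p) (Fin p) ℝ

/-- Orthogonal matrix. -/
def IsOrthoMat {p : ℕ} (V : Mat p) : Prop := V * Vᵀ = 1

/-- The loss function `Tr(X²) − 2 Tr(Σ X)` of the estimation problem. -/
def cseLoss {p : ℕ} (X S : Mat p) : ℝ := (X * X).trace - 2 * (S * X).trace

/-- Squared Frobenius norm. -/
def frobSq {p : ℕ} (X : Mat p) : ℝ := (Xᵀ * X).trace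

/-- Feasibility for the uncertainty set `B_ε(Σ̂)`. -/
def Feas {p : ℕ} (D : Mat p → Mat p → EReal) (Sh : Mat p) (ε : ℝ) (S : Mat p) : Prop :=
  S.PosSemidef ∧ D S Sh ≤ (ε : EReal)

/-- The worst-case (primal) objective of the problem (CSE). -/
def primalVal {p : ℕ} (D : Mat p → Mat p → EReal) (Sh : Mat p) (ε : ℝ) (X : Mat p) : EReal :=
  ⨆ S : {S : Mat p // Feas D Sh ε S}, (cseLoss X S.1 : EReal)

/-- The inner (dual) objective. -/
def dualVal {p : ℕ} (S : Mat p) : EReal :=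
  ⨅ X : {X : Mat p // X.PosSemidef}, (cseLoss X.1 S : EReal)

/-- `X` solves the primal problem (CSE). -/
def IsCSESol {p : ℕ} (D : Mat p → Mat p → EReal) (Sh : Mat p) (ε : ℝ) (X : Mat p) : Prop :=
  X.PosSemidef ∧ ∀ Y : Mat p, Y.PosSemidef → primalVal D Sh ε X ≤ primalVal D Sh ε Y

/-- `S` solves the dual problem. -/
def IsDualSol {p : ℕ} (D : Mat p → Mat p → EReal) (Sh : Mat p) (ε : ℝ) (S : Mat p) : Prop :=
  Feas D Sh ε S ∧ ∀ T : Mat p, Feas D Sh ε T → dualVal T ≤ dualVal S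

/-- `S` solves the problem (P_Mat). -/
def IsPMatSol {p : ℕ} (D : Mat p → Mat p → EReal) (Sh : Mat p) (ε : ℝ) (S : Mat p) : Prop :=
  Feas D Sh ε S ∧ ∀ T : Mat p, Feas D Sh ε T → frobSq S ≤ frobSq T

/-- Assumption 1 (minimax): the optimal value of (CSE) equals the optimal value of the dual. -/
def MinimaxEq {p : ℕ} (D : Mat p → Mat p → EReal) (Sh : Mat p) (ε : ℝ) : Prop :=
  (⨅ X : {X : Mat p // X.PosSemidef}, primalVal D Sh ε X.1)
    = ⨆ S : {S : Mat p // Feas D Sh ε S}, dualVal S.1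

/-- `x` solves the problem (P_Vec). -/
def IsPVecSol {p : ℕ} (d : ℝ → ℝ → EReal) (xh : Fin p → ℝ) (ε : ℝ) (x : Fin p → ℝ) : Prop :=
  (∀ i, 0 ≤ x i) ∧ (∑ i, d (x i) (xh i)) ≤ (ε : EReal) ∧
  ∀ y : Fin p → ℝ, (∀ i, 0 ≤ y i) → (∑ i, d (y i) (xh i)) ≤ (ε : EReal) →
    ∑ i, (x i) ^ 2 ≤ ∑ i, (y i) ^ 2

/-- `D` is a divergence: nonnegative, and zero iff the arguments coincide (on its domain). -/
def DivergenceBasic {p : ℕ} (D : Mat p → Mat p → EReal) : Prop :=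
  (∀ X Y : Mat p, 0 ≤ D X Y) ∧
  (∀ X Y : Mat p, X.PosSemidef → Y.PosSemidef → D X Y ≠ ⊤ → (D X Y = 0 ↔ X = Y))

/-- Assumption 2 (spectral divergence) for `D` with generator `d`:
(a) orthogonal equivariance, (b) spectrality with continuous generator, (c) rearrangement. -/
def Assumption2 {p : ℕ} (D : Mat p → Mat p → EReal) (d : ℝ → ℝ → EReal) : Prop :=
  (∀ X Y : Mat p, X.PosSemidef → Y.PosSemidef → ∀ V : Mat p, IsOrthoMat V →
      D X Y = D (V * X * Vᵀ) (V * Y * Vᵀ)) ∧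
  (∀ x y : Fin p → ℝ, (∀ i, 0 ≤ x i) → (∀ i, 0 ≤ y i) →
      D (Matrix.diagonal x) (Matrix.diagonal y) = ∑ i, d (x i) (y i)) ∧
  (∀ b : ℝ, 0 < b → ContinuousOn (fun a => d a b) (Set.Ici 0)) ∧
  (∀ x y : Fin p → ℝ, Monotone x → Monotone y → (∀ i, 0 ≤ x i) → (∀ i, 0 ≤ y i) →
    ∀ V : Mat p, IsOrthoMat V →
      D (Matrix.diagonal x) (Matrix.diagonal y)
        ≤ D (V * Matrix.diagonal x * Vᵀ) (Matrix.diagonal y) ∧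
      (D (V * Matrix.diagonal x * Vᵀ) (Matrix.diagonal y) ≠ ⊤ →
        (D (V * Matrix.diagonal x * Vᵀ) (Matrix.diagonal y)
            = D (Matrix.diagonal x) (Matrix.diagonal y)
          ↔ V * Matrix.diagonal x * Vᵀ = Matrix.diagonal x)))

/-- The generator-level part of Assumption 2: `d` is a spectral divergence on `ℝ₊`. -/
def GenBasic (d : ℝ → ℝ → EReal) : Prop :=
  (∀ a b : ℝ, 0 ≤ a → 0 ≤ b → 0 ≤ d a b) ∧
  (∀ a b : ℝ, 0 ≤ a → 0 ≤ b → d a b ≠ ⊤ → (d a b = 0 ↔ a = b)) ∧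
  (∀ b : ℝ, 0 < b → ContinuousOn (fun a => d a b) (Set.Ici 0))

/-- Assumption 3 (regularity of input parameters). -/
def Assumption3 {p : ℕ} (d : ℝ → ℝ → EReal) (xh : Fin p → ℝ) (ε : ℝ) : Prop :=
  (∀ i, d (xh i) (xh i) ≠ ⊤) ∧ 0 < ε ∧ (ε : EReal) < ∑ i, d 0 (xh i)

/-- Assumption 4 (smoothness and convexity of the generator): for every `b > 0`,
`a ↦ d(a,b)` is finite and twice continuously differentiable on `(0,∞)` with partial
derivatives `d₁, d₂`, and convex on `[0,b]` (as an extended-real-valued function). -/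
def Assumption4 (d : ℝ → ℝ → EReal) (d₁ d₂ : ℝ → ℝ → ℝ) : Prop :=
  (∀ a b : ℝ, 0 < a → 0 < b → d a b ≠ ⊤) ∧
  (∀ a b : ℝ, 0 < a → 0 < b → HasDerivAt (fun t => (d t b).toReal) (d₁ a b) a) ∧
  (∀ a b : ℝ, 0 < a → 0 < b → HasDerivAt (fun t => d₁ t b) (d₂ a b) a) ∧
  (∀ b : ℝ, 0 < b → ContinuousOn (fun a => d₂ a b) (Set.Ioi 0)) ∧
  (∀ b : ℝ, 0 < b → ∀ a₁ ∈ Set.Icc (0:ℝ) b, ∀ a₂ ∈ Set.Icc (0:ℝ) b, ∀ t ∈ Set.Icc (0:ℝ) 1,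
      d (t * a₁ + (1 - t) * a₂) b ≤ (t : EReal) * d a₁ b + ((1 - t : ℝ) : EReal) * d a₂ b)

/-- Assumption 5 (differential inequality): `d` is twice continuously differentiable on
`(0,∞)²` (mixed partial `d₁b` of `d₁` in `b` exists and the second partials are continuous)
and satisfies `a·∂²d/∂a² + b·∂²d/∂a∂b ≥ ∂d/∂a` for `0 < a < b`. -/
def Assumption5 (d₁ d₂ d₁b : ℝ → ℝ → ℝ) : Prop :=
  (∀ a b : ℝ, 0 < a → 0 < b → HasDerivAt (fun t => d₁ a t) (d₁b a b) b) ∧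
  ContinuousOn (fun q : ℝ × ℝ => d₂ q.1 q.2) (Set.Ioi 0 ×ˢ Set.Ioi 0) ∧
  ContinuousOn (fun q : ℝ × ℝ => d₁b q.1 q.2) (Set.Ioi 0 ×ˢ Set.Ioi 0) ∧
  (∀ a b : ℝ, 0 < a → a < b → d₁ a b ≤ a * d₂ a b + b * d₁b a b)

/-- The eigenvalue map `s`: for `γ, b > 0`, `s(γ,b)` is the unique `a ≥ 0` with
`2a + γ·∂d/∂a(a,b) = 0`; and `s(γ,b) = 0` if `γ = 0` or `b = 0`. -/
def EigenMapSpec (d₁ s : ℝ → ℝ → ℝ) : Prop :=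
  (∀ γ b : ℝ, γ = 0 ∨ b = 0 → s γ b = 0) ∧
  (∀ γ b : ℝ, 0 < γ → 0 < b →
    0 ≤ s γ b ∧ 2 * s γ b + γ * d₁ (s γ b) b = 0 ∧
    ∀ a : ℝ, 0 ≤ a → 2 * a + γ * d₁ a b = 0 → a = s γ b)

/-- Positive semidefinite square root (junk value `0` off the PSD cone). -/
def msqrt {p : ℕ} (A : Mat p) : Mat p :=
  if h : A.PosSemidef then
    (h.1.eigenvectorUnitary : Mat p) * Matrix.diagonal ((↑) ∘ Real.sqrt ∘ h.1.eigenvalues) *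
      (star h.1.eigenvectorUnitary : Mat p)
  else 0

/-- Eigenvalues of a symmetric matrix (junk value `0` if not symmetric). -/
def symEig {p : ℕ} (A : Mat p) : Fin p → ℝ :=
  if h : A.IsHermitian then h.eigenvalues else 0

/-- The Wasserstein divergence between covariance matrices:
`D(Σ₁,Σ₂) = Tr Σ₁ + Tr Σ₂ − 2 Tr((Σ₂^{1/2} Σ₁ Σ₂^{1/2})^{1/2})` for positive
semidefinite arguments, `+∞` otherwise. -/
def DW {p : ℕ} (S1 S2 : Mat p) : EReal :=
  if S1.PosSemidef ∧ S2.PosSemidef then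
    ((S1.trace + S2.trace - 2 * (msqrt (msqrt S2 * S1 * msqrt S2)).trace : ℝ) : EReal)
  else ⊤

/-- The eigenvalue map of the Wasserstein divergence. -/
def sW (γ b : ℝ) : ℝ :=
  ((((γ / 4) * (Real.sqrt b + Real.sqrt (b + 2 * γ / 27))) ^ ((1 : ℝ) / 3))
    - (γ / 6) * (((γ / 4) * (Real.sqrt b + Real.sqrt (b + 2 * γ / 27))) ^ (-(1 : ℝ) / 3))) ^ 2

lemma sW_nonneg (γ b : ℝ) : 0 ≤ sW γ b := sq_nonneg _

/-- Core cubic facts about `sW`. -/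
lemma sW_core {γ b : ℝ} (hγ : 0 < γ) (hb : 0 ≤ b) :
    ∃ u : ℝ, 0 ≤ u ∧ sW γ b = u ^ 2 ∧ 2 * u ^ 3 + γ * u = γ * Real.sqrt b ∧
      (0 < b → 0 < u) := by
  set t : ℝ := (γ / 4) * (Real.sqrt b + Real.sqrt (b + 2 * γ / 27)) with ht_def
  have hb2 : 0 < b + 2 * γ / 27 := by linarith
  have hs2 : 0 < Real.sqrt (b + 2 * γ / 27) := Real.sqrt_pos.2 hb2
  have ht : 0 < t := by
    apply mul_pos (by linarith)
    have := Real.sqrt_nonneg b; linarith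
  set c : ℝ := t ^ ((1 : ℝ) / 3) with hc_def
  have hc : 0 < c := Real.rpow_pos_of_pos ht _
  have hc3 : c ^ 3 = t := by
    rw [hc_def, ← Real.rpow_natCast (t ^ ((1:ℝ)/3)) 3, ← Real.rpow_mul ht.le]
    norm_num
  have hneg : t ^ (-(1 : ℝ) / 3) = c⁻¹ := by
    rw [hc_def, ← Real.rpow_neg ht.le]
    norm_num
  set u : ℝ := c - γ / 6 * c⁻¹ with hu_def
  have hsW : sW γ b = u ^ 2 := by rw [sW, hneg]
  have e1 : Real.sqrt (b + 2 * γ / 27) ^ 2 = b + 2 * γ / 27 := Real.sq_sqrt hb2.le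
  have e2 : Real.sqrt b ^ 2 = b := Real.sq_sqrt hb
  have ht2 : t ^ 2 = γ * Real.sqrt b / 2 * t + γ ^ 3 / 216 := by
    rw [ht_def]; linear_combination (γ^2/16) * e1 - (γ^2/16) * e2
  have hc6 : c ^ 6 = γ * Real.sqrt b / 2 * c ^ 3 + γ ^ 3 / 216 := by
    have h6 : c ^ 6 = (c ^ 3) ^ 2 := by ring
    rw [h6, hc3, ht2]
  have huc : u * c = c ^ 2 - γ / 6 := by
    rw [hu_def]; field_simp
  have hcu : c ^ 2 ≥ γ / 6 := by
    by_contra h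
    push_neg at h
    have h3 : (c ^ 2) ^ 3 < (γ / 6) ^ 3 := by
      apply pow_lt_pow_left₀ h (sq_nonneg c)
      norm_num
    have hsb : 0 ≤ γ * Real.sqrt b / 2 * c ^ 3 :=
      mul_nonneg (by positivity) (by positivity)
    nlinarith
  have hu0 : 0 ≤ u := by
    rw [hu_def, sub_nonneg]
    have h1 : γ / 6 * c⁻¹ ≤ c ^ 2 * c⁻¹ :=
      mul_le_mul_of_nonneg_right hcu (by positivity)
    have h2 : c ^ 2 * c⁻¹ = c := by field_simp
    linarith
  have hcube : 2 * u ^ 3 + γ * u = γ * Real.sqrt b := by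
    have hgoal : (2 * u ^ 3 + γ * u - γ * Real.sqrt b) * c ^ 3 = 0 := by
      linear_combination (2 * ((u*c)^2 + (u*c)*(c^2 - γ/6) + (c^2 - γ/6)^2) + γ * c^2) * huc + 2 * hc6
    have hc3ne : c ^ 3 ≠ 0 := by positivity
    have := mul_eq_zero.mp hgoal
    rcases this with h | h
    · linarith
    · exact absurd h hc3ne
  refine ⟨u, hu0, hsW, hcube, ?_⟩
  intro hbpos
  have hsb : 0 < Real.sqrt b := Real.sqrt_pos.2 hbpos
  have hc2 : γ / 6 < c ^ 2 := by
    by_contra h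
    push_neg at h
    have h3 : (c ^ 2) ^ 3 ≤ (γ / 6) ^ 3 := by
      apply pow_le_pow_left₀ (sq_nonneg c) h
    nlinarith [mul_pos (mul_pos (mul_pos hγ hsb) (by norm_num : (0:ℝ) < 1/2)) (pow_pos hc 3)]
  rw [hu_def, sub_pos]
  calc γ / 6 * c⁻¹ < c ^ 2 * c⁻¹ := by
        apply mul_lt_mul_of_pos_right hc2 (by positivity)
  _ = c := by field_simp

lemma sW_zero {γ : ℝ} (hγ : 0 < γ) : sW γ 0 = 0 := by
  obtain ⟨u, hu0, hs, hcube, -⟩ := sW_core hγ le_rfl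
  rw [Real.sqrt_zero, mul_zero] at hcube
  have hu : u = 0 := by nlinarith
  rw [hs, hu]; ring

/-- For positive `b`: positivity and the key algebraic relation. -/
lemma sW_key {γ b : ℝ} (hγ : 0 < γ) (hb : 0 < b) :
    0 < sW γ b ∧ (2 * sW γ b + γ) * Real.sqrt (sW γ b) = γ * Real.sqrt b := by
  obtain ⟨u, hu0, hs, hcube, hpos⟩ := sW_core hγ hb.le
  have hu : 0 < u := hpos hb
  have hsq : Real.sqrt (sW γ b) = u := by rw [hs, Real.sqrt_sq hu0]
  constructor
  · rw [hs]; positivity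
  · rw [hsq, hs]; linarith [hcube]

lemma sW_lt {γ b : ℝ} (hγ : 0 < γ) (hb : 0 < b) : sW γ b < b := by
  obtain ⟨hpos, hkey⟩ := sW_key hγ hb
  by_contra h
  push_neg at h
  have h1 : Real.sqrt b ≤ Real.sqrt (sW γ b) := Real.sqrt_le_sqrt h
  have h2 : 0 < Real.sqrt (sW γ b) := Real.sqrt_pos.2 hpos
  nlinarith [Real.sqrt_nonneg b]

lemma sW_eq {γ b : ℝ} (hγ : 0 < γ) (hb : 0 < b) :
    2 * sW γ b + γ * (1 - Real.sqrt (b / sW γ b)) = 0 := by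
  obtain ⟨hpos, hkey⟩ := sW_key hγ hb
  have h2 : 0 < Real.sqrt (sW γ b) := Real.sqrt_pos.2 hpos
  rw [Real.sqrt_div hb.le]
  field_simp
  linarith [hkey]

/-- Strict monotonicity of `a ↦ (2a+γ)√a`. -/
lemma keyfun_lt {γ a₁ a₂ : ℝ} (hγ : 0 < γ) (h1 : 0 ≤ a₁) (h12 : a₁ < a₂) :
    (2 * a₁ + γ) * Real.sqrt a₁ < (2 * a₂ + γ) * Real.sqrt a₂ := by
  have hs : Real.sqrt a₁ < Real.sqrt a₂ := Real.sqrt_lt_sqrt h1 h12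
  have h2 : 0 < Real.sqrt a₂ := Real.sqrt_pos.2 (lt_of_le_of_lt h1 h12)
  nlinarith [Real.sqrt_nonneg a₁]

lemma sW_unique {γ b a : ℝ} (hγ : 0 < γ) (hb : 0 < b) (ha : 0 < a)
    (heq : 2 * a + γ * (1 - Real.sqrt (b / a)) = 0) : a = sW γ b := by
  have hsa : 0 < Real.sqrt a := Real.sqrt_pos.2 ha
  have hkeya : (2 * a + γ) * Real.sqrt a = γ * Real.sqrt b := by
    rw [Real.sqrt_div hb.le] at heq
    field_simp at heq
    nlinarith [heq]
  obtain ⟨hpos, hkey⟩ := sW_key hγ hb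
  rcases lt_trichotomy a (sW γ b) with h | h | h
  · have := keyfun_lt hγ ha.le h
    rw [hkeya, hkey] at this; linarith
  · exact h
  · have := keyfun_lt hγ hpos.le h
    rw [hkeya, hkey] at this; linarith

lemma sW_strictMono {γ₁ γ₂ b : ℝ} (h1 : 0 < γ₁) (h12 : γ₁ < γ₂) (hb : 0 < b) :
    sW γ₁ b < sW γ₂ b := by
  have h2 : 0 < γ₂ := h1.trans h12
  obtain ⟨hp1, hk1⟩ := sW_key h1 hb
  obtain ⟨hp2, hk2⟩ := sW_key h2 hb
  by_contra h
  push_neg at h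
  have hlt : sW γ₁ b < b := sW_lt h1 hb
  have hmono : (2 * sW γ₂ b + γ₂) * Real.sqrt (sW γ₂ b)
      ≤ (2 * sW γ₁ b + γ₂) * Real.sqrt (sW γ₁ b) := by
    rcases eq_or_lt_of_le h with h' | h'
    · rw [h']
    · exact (keyfun_lt h2 hp2.le h').le
  have hs1b : Real.sqrt (sW γ₁ b) < Real.sqrt b := Real.sqrt_lt_sqrt hp1.le hlt
  have hs1 : 0 < Real.sqrt (sW γ₁ b) := Real.sqrt_pos.2 hp1
  -- (2 s₁ + γ₂)√s₁ = γ₁√b + (γ₂-γ₁)√s₁ < γ₂ √b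
  nlinarith [Real.sqrt_pos.2 hb]

lemma sW_diff_sq {γ b : ℝ} (hγ : 0 < γ) (hb : 0 < b) :
    (Real.sqrt b - Real.sqrt (sW γ b)) ^ 2 = 4 * (sW γ b) ^ 3 / γ ^ 2 := by
  obtain ⟨hpos, hkey⟩ := sW_key hγ hb
  have hd : Real.sqrt b - Real.sqrt (sW γ b) = 2 * sW γ b * Real.sqrt (sW γ b) / γ := by
    field_simp
    linarith [hkey]
  rw [hd]
  have := Real.sq_sqrt hpos.le
  field_simp
  nlinarith [this]

lemma sW_cube_le {γ b : ℝ} (hγ : 0 < γ) (hb : 0 < b) : (sW γ b) ^ 3 ≤ γ ^ 2 * b / 4 := by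
  obtain ⟨hpos, hkey⟩ := sW_key hγ hb
  have h1 : ((2 * sW γ b + γ) * Real.sqrt (sW γ b)) ^ 2 = (γ * Real.sqrt b) ^ 2 := by
    rw [hkey]
  rw [mul_pow, mul_pow, Real.sq_sqrt hpos.le, Real.sq_sqrt hb.le] at h1
  nlinarith [hpos, sq_nonneg (sW γ b)]

lemma sW_continuousAt {b γ₀ : ℝ} (hb : 0 ≤ b) (h : 0 < γ₀) :
    ContinuousAt (fun γ => sW γ b) γ₀ := by
  have htc : ContinuousAt (fun γ : ℝ => (γ / 4) * (Real.sqrt b + Real.sqrt (b + 2 * γ / 27))) γ₀ := by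
    apply ContinuousAt.mul
    · exact (continuousAt_id.div_const 4)
    · exact continuousAt_const.add
        ((Real.continuous_sqrt.continuousAt).comp (by fun_prop))
  have ht0 : 0 < γ₀ / 4 * (Real.sqrt b + Real.sqrt (b + 2 * γ₀ / 27)) := by
    apply mul_pos (by linarith)
    have h1 : 0 < Real.sqrt (b + 2 * γ₀ / 27) := Real.sqrt_pos.2 (by linarith)
    linarith [Real.sqrt_nonneg b]
  have hA : ContinuousAt (fun γ : ℝ =>
      ((γ / 4) * (Real.sqrt b + Real.sqrt (b + 2 * γ / 27))) ^ ((1:ℝ)/3)) γ₀ :=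
    ContinuousAt.comp (x := γ₀) (Real.continuousAt_rpow_const _ _ (Or.inl ht0.ne')) htc
  have hB : ContinuousAt (fun γ : ℝ =>
      ((γ / 4) * (Real.sqrt b + Real.sqrt (b + 2 * γ / 27))) ^ (-(1:ℝ)/3)) γ₀ :=
    ContinuousAt.comp (x := γ₀) (Real.continuousAt_rpow_const _ _ (Or.inl ht0.ne')) htc
  unfold sW
  exact ((hA.sub ((continuousAt_id.div_const 6).mul hB)).pow 2)

lemma sW_tendsto_zero {b : ℝ} (hb : 0 ≤ b) :
    Tendsto (fun γ => sW γ b) (nhdsWithin 0 (Set.Ioi 0)) (nhds 0) := by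
  rcases eq_or_lt_of_le hb with hb0 | hbpos
  · apply Tendsto.congr' (f₁ := fun _ => 0)
    · filter_upwards [self_mem_nhdsWithin] with γ (hγ : 0 < γ)
      rw [← hb0, sW_zero hγ]
    · exact tendsto_const_nhds
  · have hbound : ∀ γ : ℝ, 0 < γ → sW γ b ≤ (γ ^ 2 * b / 4) ^ ((1:ℝ)/3) := by
      intro γ hγ
      have h3 : (sW γ b) ^ 3 ≤ γ ^ 2 * b / 4 := sW_cube_le hγ hbpos
      have h0 : 0 ≤ sW γ b := sW_nonneg γ b
      calc sW γ b = ((sW γ b) ^ 3) ^ ((1:ℝ)/3) := by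
            rw [← Real.rpow_natCast (sW γ b) 3, ← Real.rpow_mul h0]
            norm_num
      _ ≤ (γ ^ 2 * b / 4) ^ ((1:ℝ)/3) :=
            Real.rpow_le_rpow (by positivity) h3 (by norm_num)
    have hg : Tendsto (fun γ : ℝ => (γ ^ 2 * b / 4) ^ ((1:ℝ)/3))
        (nhdsWithin 0 (Set.Ioi 0)) (nhds 0) := by
      have h1 : Tendsto (fun γ : ℝ => γ ^ 2 * b / 4) (nhdsWithin 0 (Set.Ioi 0)) (nhds 0) := by
        have : Tendsto (fun γ : ℝ => γ ^ 2 * b / 4) (nhds 0) (nhds (0 ^ 2 * b / 4)) :=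
          (Continuous.tendsto (by continuity) 0)
        simpa using this.mono_left nhdsWithin_le_nhds
      have h2 : ContinuousAt (fun x : ℝ => x ^ ((1:ℝ)/3)) 0 :=
        Real.continuousAt_rpow_const 0 _ (Or.inr (by norm_num))
      have := h2.tendsto.comp h1
      simpa [Function.comp_def, Real.zero_rpow (by norm_num : (1:ℝ)/3 ≠ 0)] using this
    apply squeeze_zero'
    · filter_upwards with γ using sW_nonneg γ b
    · filter_upwards [self_mem_nhdsWithin] with γ (hγ : 0 < γ) using hbound γ hγ
    · exact hg

section Gamma

variable {p : ℕ} {xh : Fin p → ℝ} {ε : ℝ}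

/-- The deviation function `g`. -/
def gFun (xh : Fin p → ℝ) (γ : ℝ) : ℝ :=
  ∑ i, (Real.sqrt (xh i) - Real.sqrt (sW γ (xh i))) ^ 2

lemma gFun_term_zero {γ b : ℝ} (hγ : 0 < γ) (hb : b = 0) :
    (Real.sqrt b - Real.sqrt (sW γ b)) ^ 2 = 0 := by
  rw [hb, sW_zero hγ]; simp

lemma gFun_continuousAt (hx : ∀ i, 0 ≤ xh i) {γ₀ : ℝ} (h : 0 < γ₀) :
    ContinuousAt (gFun xh) γ₀ := by
  have hterm : ∀ i : Fin p, ContinuousAt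
      (fun γ => (Real.sqrt (xh i) - Real.sqrt (sW γ (xh i))) ^ 2) γ₀ := fun i =>
    ((continuousAt_const.sub
      ((Real.continuous_sqrt.continuousAt).comp (sW_continuousAt (hx i) h))).pow 2)
  exact tendsto_finset_sum _ fun i _ => hterm i

lemma gFun_strictAnti (hx : ∀ i, 0 ≤ xh i) {i0 : Fin p} (hi0 : 0 < xh i0)
    {γ₁ γ₂ : ℝ} (h1 : 0 < γ₁) (h12 : γ₁ < γ₂) : gFun xh γ₂ < gFun xh γ₁ := by
  have h2 : 0 < γ₂ := h1.trans h12
  apply Finset.sum_lt_sum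
  · intro i _
    rcases eq_or_lt_of_le (hx i) with hb | hb
    · rw [gFun_term_zero h1 hb.symm, gFun_term_zero h2 hb.symm]
    · have hlt := sW_strictMono h1 h12 hb
      have hub := sW_lt h2 hb
      have k1 : Real.sqrt (sW γ₁ (xh i)) < Real.sqrt (sW γ₂ (xh i)) :=
        Real.sqrt_lt_sqrt (sW_nonneg _ _) hlt
      have k2 : Real.sqrt (sW γ₂ (xh i)) < Real.sqrt (xh i) :=
        Real.sqrt_lt_sqrt (sW_nonneg _ _) hub
      have : 0 ≤ Real.sqrt (xh i) - Real.sqrt (sW γ₂ (xh i)) := by linarith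
      nlinarith
  · refine ⟨i0, Finset.mem_univ _, ?_⟩
    have hlt := sW_strictMono h1 h12 hi0
    have hub := sW_lt h2 hi0
    have k1 : Real.sqrt (sW γ₁ (xh i0)) < Real.sqrt (sW γ₂ (xh i0)) :=
      Real.sqrt_lt_sqrt (sW_nonneg _ _) hlt
    have k2 : Real.sqrt (sW γ₂ (xh i0)) < Real.sqrt (xh i0) :=
      Real.sqrt_lt_sqrt (sW_nonneg _ _) hub
    nlinarith

lemma gFun_le (hx : ∀ i, 0 ≤ xh i) {γ : ℝ} (hγ : 0 < γ) :
    gFun xh γ ≤ 4 * (∑ i, (xh i) ^ 3) / γ ^ 2 := by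
  have hrw : (4 : ℝ) * (∑ i, (xh i) ^ 3) / γ ^ 2 = ∑ i, 4 * (xh i) ^ 3 / γ ^ 2 := by
    rw [Finset.mul_sum, Finset.sum_div]
  rw [hrw]
  apply Finset.sum_le_sum
  intro i _
  rcases eq_or_lt_of_le (hx i) with hb | hb
  · rw [gFun_term_zero hγ hb.symm, ← hb]; norm_num
  · rw [sW_diff_sq hγ hb]
    have h1 : (sW γ (xh i)) ^ 3 ≤ (xh i) ^ 3 :=
      pow_le_pow_left₀ (sW_nonneg _ _) (sW_lt hγ hb).le 3
    gcongr

lemma gFun_tendsto (hx : ∀ i, 0 ≤ xh i) :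
    Tendsto (gFun xh) (nhdsWithin 0 (Set.Ioi 0)) (nhds (∑ i, xh i)) := by
  apply tendsto_finset_sum
  intro i _
  have h1 : Tendsto (fun γ => (Real.sqrt (xh i) - Real.sqrt (sW γ (xh i))) ^ 2)
      (nhdsWithin 0 (Set.Ioi 0)) (nhds ((Real.sqrt (xh i) - Real.sqrt 0) ^ 2)) :=
    ((tendsto_const_nhds.sub ((sW_tendsto_zero (hx i)).sqrt)).pow 2)
  simpa [Real.sq_sqrt (hx i)] using h1

lemma gamma_exists_unique (hx : ∀ i, 0 ≤ xh i) (hε : 0 < ε) (hsum : ε < ∑ i, xh i) :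
    ∃! γ : ℝ, 0 < γ ∧ ε - ∑ i, (Real.sqrt (xh i) - Real.sqrt (sW γ (xh i))) ^ 2 = 0 := by
  have hi0 : ∃ i0, 0 < xh i0 := by
    by_contra h
    push_neg at h
    have : ∑ i, xh i = 0 := Finset.sum_eq_zero fun i _ => le_antisymm (h i) (hx i)
    rw [this] at hsum; linarith
  obtain ⟨i0, hi0⟩ := hi0
  -- γ_lo with gFun > ε
  have hlo : ∃ γlo : ℝ, 0 < γlo ∧ ε < gFun xh γlo := by
    have hev : ∀ᶠ γ in nhdsWithin 0 (Set.Ioi 0), ε < gFun xh γ :=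
      (gFun_tendsto hx).eventually (eventually_gt_nhds hsum)
    obtain ⟨γlo, h1, h2⟩ := (eventually_mem_nhdsWithin.and hev).exists
    exact ⟨γlo, h1, h2⟩
  obtain ⟨γlo, hγlo, hglo⟩ := hlo
  set K : ℝ := ∑ i, (xh i) ^ 3 with hK
  have hK0 : 0 ≤ K := Finset.sum_nonneg fun i _ => pow_nonneg (hx i) 3
  set γhi : ℝ := max (γlo + 1) (2 * Real.sqrt (K / ε) + 1) with hγhi
  have hγhi1 : γlo + 1 ≤ γhi := le_max_left _ _
  have hγhi2 : 2 * Real.sqrt (K / ε) + 1 ≤ γhi := le_max_right _ _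
  have hγhipos : 0 < γhi := by
    have := Real.sqrt_nonneg (K / ε); linarith
  have hghi : gFun xh γhi ≤ ε := by
    have h1 := gFun_le hx hγhipos
    have h2 : 4 * K ≤ ε * γhi ^ 2 := by
      have hs : Real.sqrt (K / ε) ^ 2 = K / ε := Real.sq_sqrt (by positivity)
      have hr : 0 ≤ Real.sqrt (K / ε) := Real.sqrt_nonneg _
      have h3 : (2 * Real.sqrt (K / ε) + 1) ^ 2 ≤ γhi ^ 2 :=
        pow_le_pow_left₀ (by linarith) hγhi2 2
      have h4 : ε * (K / ε) = K := by field_simp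
      nlinarith [mul_le_mul_of_nonneg_left h3 hε.le]
    calc gFun xh γhi ≤ 4 * K / γhi ^ 2 := h1
    _ ≤ ε := by rw [div_le_iff₀ (by positivity)]; linarith
  -- IVT
  have hcont : ContinuousOn (gFun xh) (Set.Icc γlo γhi) := fun γ hγ =>
    (gFun_continuousAt hx (lt_of_lt_of_le hγlo hγ.1)).continuousWithinAt
  have hsub : ε ∈ Set.Icc (gFun xh γhi) (gFun xh γlo) := ⟨hghi, hglo.le⟩
  obtain ⟨γs, hγsmem, hγseq⟩ := intermediate_value_Icc' (by linarith) hcont hsub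
  have hγspos : 0 < γs := lt_of_lt_of_le hγlo hγsmem.1
  refine ⟨γs, ⟨hγspos, ?_⟩, ?_⟩
  · show ε - gFun xh γs = 0
    linarith [hγseq]
  · rintro γ' ⟨hγ'pos, hγ'eq⟩
    have hg' : gFun xh γ' = ε := by
      have : ε - gFun xh γ' = 0 := hγ'eq
      linarith
    by_contra hne
    rcases lt_trichotomy γ' γs with h | h | h
    · have := gFun_strictAnti hx hi0 hγ'pos h
      rw [hg', hγseq] at this; linarith
    · exact hne h
    · have := gFun_strictAnti hx hi0 hγspos h
      rw [hg', hγseq] at this; linarith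

end Gamma



section MatrixAux

variable {p : ℕ} {V : Mat p} {a b : Fin p → ℝ}

/-- Conjugation of a diagonal matrix. -/
def cj (V : Mat p) (a : Fin p → ℝ) : Mat p := V * Matrix.diagonal a * Vᵀ

lemma ortho_tV (hV : IsOrthoMat V) : Vᵀ * V = 1 := mul_eq_one_comm.mp hV

lemma cj_mul (hV : IsOrthoMat V) (a b : Fin p → ℝ) :
    cj V a * cj V b = cj V (fun i => a i * b i) := by
  unfold cj
  simp only [Matrix.mul_assoc]
  rw [show Vᵀ * (V * (Matrix.diagonal b * Vᵀ)) = Matrix.diagonal b * Vᵀ from by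
    rw [← Matrix.mul_assoc, ortho_tV hV, Matrix.one_mul]]
  rw [← Matrix.mul_assoc (Matrix.diagonal a), Matrix.diagonal_mul_diagonal]

lemma cj_transpose (a : Fin p → ℝ) : (cj V a)ᵀ = cj V a := by
  unfold cj
  rw [Matrix.transpose_mul, Matrix.transpose_mul, Matrix.transpose_transpose,
    Matrix.diagonal_transpose, Matrix.mul_assoc]

lemma cj_herm (a : Fin p → ℝ) : (cj V a).IsHermitian := by
  unfold Matrix.IsHermitian
  rw [Matrix.conjTranspose_eq_transpose_of_trivial]
  exact cj_transpose a

lemma cj_psd (ha : ∀ i, 0 ≤ a i) : (cj V a).PosSemidef := by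
  have h := (Matrix.PosSemidef.diagonal (R := ℝ) (n := Fin p) ha).mul_mul_conjTranspose_same V
  rwa [Matrix.conjTranspose_eq_transpose_of_trivial] at h

lemma cj_trace (hV : IsOrthoMat V) (a : Fin p → ℝ) : (cj V a).trace = ∑ i, a i := by
  unfold cj
  rw [Matrix.trace_mul_cycle, ortho_tV hV, Matrix.one_mul, Matrix.trace_diagonal]

lemma cj_one (hV : IsOrthoMat V) : cj V (fun _ => 1) = 1 := by
  unfold cj
  rw [show (Matrix.diagonal fun _ : Fin p => (1:ℝ)) = 1 from Matrix.diagonal_one,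
    Matrix.mul_one]
  exact hV

lemma cj_add (a b : Fin p → ℝ) : cj V a + cj V b = cj V (fun i => a i + b i) := by
  unfold cj
  rw [show (Matrix.diagonal fun i => a i + b i) = Matrix.diagonal a + Matrix.diagonal b from
    (Matrix.diagonal_add a b).symm, Matrix.mul_add, Matrix.add_mul]

lemma cj_sub (a b : Fin p → ℝ) : cj V a - cj V b = cj V (fun i => a i - b i) := by
  unfold cj
  rw [show (Matrix.diagonal fun i => a i - b i) = Matrix.diagonal a - Matrix.diagonal b from
    (Matrix.diagonal_sub a b).symm, Matrix.mul_sub, Matrix.sub_mul]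

lemma cj_smul (r : ℝ) (a : Fin p → ℝ) : r • cj V a = cj V (fun i => r * a i) := by
  unfold cj
  rw [show (fun i => r * a i) = r • a from rfl, Matrix.diagonal_smul,
    Matrix.mul_smul, Matrix.smul_mul]

open scoped MatrixOrder in
lemma msqrt_eq_csqrt {A : Mat p} (hA : A.PosSemidef) : msqrt A = CFC.sqrt A := by
  rw [msqrt, dif_pos hA, CFC.sqrt_eq_cfc, cfc_nnreal_eq_real _ A hA.nonneg, hA.1.cfc_eq,
    IsHermitian.cfc, Unitary.conjStarAlgAut_apply]
  congr 3
  funext i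
  simp [Real.coe_sqrt, hA.eigenvalues_nonneg i]

open scoped MatrixOrder in
lemma msqrt_eq_of_sq {A B : Mat p} (hB : B.PosSemidef) (h : B * B = A) : msqrt A = B := by
  have hA : A.PosSemidef := by
    have h2 := Matrix.posSemidef_conjTranspose_mul_self B
    rwa [hB.isHermitian.eq, h] at h2
  rw [msqrt_eq_csqrt hA]
  exact (CFC.sqrt_eq_iff A B hA.nonneg hB.nonneg).mpr h

open scoped MatrixOrder in
lemma msqrt_psd {A : Mat p} (hA : A.PosSemidef) : (msqrt A).PosSemidef := by
  rw [msqrt_eq_csqrt hA]; exact Matrix.nonneg_iff_posSemidef.mp (CFC.sqrt_nonneg A)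

open scoped MatrixOrder in
lemma msqrt_mul_self {A : Mat p} (hA : A.PosSemidef) : msqrt A * msqrt A = A := by
  rw [msqrt_eq_csqrt hA]; exact CFC.sqrt_mul_sqrt_self A hA.nonneg

lemma msqrt_cj (hV : IsOrthoMat V) (ha : ∀ i, 0 ≤ a i) :
    msqrt (cj V a) = cj V (fun i => Real.sqrt (a i)) := by
  apply msqrt_eq_of_sq (cj_psd fun i => Real.sqrt_nonneg _)
  rw [cj_mul hV]
  have h2 : (fun i => Real.sqrt (a i) * Real.sqrt (a i)) = a :=
    funext fun i => Real.mul_self_sqrt (ha i)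
  rw [h2]

lemma psd_diag_nonneg {A : Mat p} (hA : A.PosSemidef) (i : Fin p) : 0 ≤ A i i := by
  exact hA.diag_nonneg

lemma psd_trace_nonneg {A : Mat p} (hA : A.PosSemidef) : 0 ≤ A.trace :=
  Finset.sum_nonneg fun i _ => psd_diag_nonneg hA i

lemma trace_mul_psd_nonneg {A B : Mat p} (hA : A.PosSemidef) (hB : B.PosSemidef) :
    0 ≤ (A * B).trace := by
  have hR := msqrt_psd hB
  have hRt : (msqrt B)ᴴ = msqrt B := hR.isHermitian.eq
  have h1 : A * B = A * (msqrt B * msqrt B) := by rw [msqrt_mul_self hB]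
  have h2 : (A * (msqrt B * msqrt B)).trace = ((msqrt B)ᴴ * A * msqrt B).trace := by
    rw [hRt, ← Matrix.mul_assoc, Matrix.trace_mul_cycle]
  rw [h1, h2]
  exact psd_trace_nonneg (hA.conjTranspose_mul_mul_same (msqrt B))

lemma frob_nonneg (M : Mat p) : 0 ≤ (Mᵀ * M).trace := by
  have h := Matrix.posSemidef_conjTranspose_mul_self M
  rw [Matrix.conjTranspose_eq_transpose_of_trivial] at h
  exact psd_trace_nonneg h

lemma frob_eq_zero {M : Mat p} (h : (Mᵀ * M).trace ≤ 0) : M = 0 := by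
  have hexp : (Mᵀ * M).trace = ∑ i, ∑ j, (M j i) ^ 2 := by
    simp [Matrix.trace, Matrix.mul_apply, Matrix.diag, sq, Matrix.transpose_apply]
  rw [hexp] at h
  ext i j
  have hall : ∀ i ∈ (Finset.univ : Finset (Fin p)), ∀ j ∈ (Finset.univ : Finset (Fin p)),
      (M j i : ℝ) ^ 2 = 0 := by
    have hz : ∑ i, ∑ j, (M j i) ^ 2 = 0 :=
      le_antisymm h (Finset.sum_nonneg fun i _ => Finset.sum_nonneg fun j _ => sq_nonneg _)
    intro i _ j _
    have h1 := (Finset.sum_eq_zero_iff_of_nonneg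
      (fun i _ => Finset.sum_nonneg fun j _ => sq_nonneg (M j i))).mp hz i (Finset.mem_univ _)
    exact (Finset.sum_eq_zero_iff_of_nonneg fun j _ => sq_nonneg (M j i)).mp h1 j
      (Finset.mem_univ _)
  have := hall j (Finset.mem_univ _) i (Finset.mem_univ _)
  simpa using pow_eq_zero_iff (n := 2) (by norm_num) |>.mp this

/-- The key trace–square-root inequality `2 Tr √M ≤ Tr(M N) + Tr N⁻¹` in explicit form. -/
lemma traceSqrt_le {M P P' : Mat p} (hM : M.PosSemidef) (hP : Pᵀ = P) (hP' : P'ᵀ = P')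
    (hPP' : P * P' = 1) :
    2 * (msqrt M).trace ≤ (M * (P * P)).trace + (P' * P').trace := by
  set R := msqrt M with hR_def
  have hRpsd := msqrt_psd hM
  have hRt : Rᵀ = R := by
    have := hRpsd.isHermitian.eq
    rwa [Matrix.conjTranspose_eq_transpose_of_trivial] at this
  have hRR : R * R = M := msqrt_mul_self hM
  have hP'P : P' * P = 1 := mul_eq_one_comm.mp hPP'
  set W := R * P - P' with hW_def
  have h0 : 0 ≤ (Wᵀ * W).trace := frob_nonneg W
  have hWt : Wᵀ = P * R - P' := by
    rw [hW_def, Matrix.transpose_sub, Matrix.transpose_mul, hRt, hP, hP']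
  have hexp : Wᵀ * W = P * R * R * P - P * R * P' - P' * R * P + P' * P' := by
    rw [hWt, hW_def]
    noncomm_ring
  have ht1 : (P * R * R * P).trace = (M * (P * P)).trace := by
    rw [Matrix.trace_mul_cycle (P * R) R P]
    rw [show P * (P * R) * R = P * P * (R * R) from by noncomm_ring]
    rw [hRR, Matrix.trace_mul_comm]
  have ht2 : (P * R * P').trace = R.trace := by
    rw [Matrix.trace_mul_cycle P R P', hP'P, Matrix.one_mul]
  have ht3 : (P' * R * P).trace = R.trace := by
    rw [Matrix.trace_mul_cycle P' R P, hPP', Matrix.one_mul]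
  rw [hexp, Matrix.trace_add, Matrix.trace_sub, Matrix.trace_sub, ht1, ht2, ht3] at h0
  linarith

end MatrixAux

section VI

variable {p : ℕ} {V : Mat p} {xh : Fin p → ℝ} {γ ε : ℝ}

/-- Scalar equality at the heart of the KKT computation. -/
lemma scalar_eq {γ b s : ℝ} (hγ : 0 < γ) (hb : 0 < b) (hs : 0 ≤ s)
    (hkey : (2 * s + γ) * Real.sqrt s = γ * Real.sqrt b) :
    γ / 2 * (b - γ * b / (2 * s + γ))
      = s ^ 2 + γ / 2 * (Real.sqrt b - Real.sqrt s) ^ 2 := by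
  set u := Real.sqrt s with hu
  set v := Real.sqrt b with hv
  have hu2 : u ^ 2 = s := Real.sq_sqrt hs
  have hv2 : v ^ 2 = b := Real.sq_sqrt hb.le
  have hγ' : γ ≠ 0 := hγ.ne'
  have hveq : v = (2 * s + γ) * u / γ := by
    field_simp
    linarith [hkey]
  have hpos : (0:ℝ) < 2 * s + γ := by linarith
  rw [← hu2, ← hv2, hveq, ← hu2]
  field_simp
  ring

/-- The variational inequality: any feasible `S` satisfies `Tr(S X*) ≥ Tr(X*²)`. -/
lemma variational_ineq (hV : IsOrthoMat V) (hx : ∀ i, 0 ≤ xh i) (hγ : 0 < γ)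
    (hε : ε = ∑ i, (Real.sqrt (xh i) - Real.sqrt (sW γ (xh i))) ^ 2)
    {S : Mat p} (hS : S.PosSemidef)
    (hDW : S.trace + (cj V xh).trace
        - 2 * (msqrt (msqrt (cj V xh) * S * msqrt (cj V xh))).trace ≤ ε) :
    ((cj V (fun i => sW γ (xh i))) * (cj V (fun i => sW γ (xh i)))).trace
      ≤ (S * cj V (fun i => sW γ (xh i))).trace := by
  set s : Fin p → ℝ := fun i => sW γ (xh i) with hs_def
  have hs0 : ∀ i, 0 ≤ s i := fun i => sW_nonneg _ _
  have hszero : ∀ i, xh i = 0 → s i = 0 := fun i h => by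
    simp only [hs_def, h, sW_zero hγ]
  have hskey : ∀ i, 0 < xh i → (2 * s i + γ) * Real.sqrt (s i) = γ * Real.sqrt (xh i) :=
    fun i h => (sW_key hγ h).2
  set Q : Mat p := msqrt (cj V xh) with hQ_def
  have hQ : Q = cj V (fun i => Real.sqrt (xh i)) := msqrt_cj hV hx
  set M : Mat p := Q * S * Q with hM_def
  have hQherm : Qᴴ = Q := by rw [hQ]; exact (cj_herm _).eq
  have hMpsd : M.PosSemidef := by
    have := hS.conjTranspose_mul_mul_same Q
    rwa [hQherm] at this
  have hXX : ((cj V s) * (cj V s)).trace = ∑ i, (s i) ^ 2 := by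
    rw [cj_mul hV, cj_trace hV]
    apply Finset.sum_congr rfl
    intro i _; ring
  -- Step: for every `c > 0` an approximate lower bound
  have hstep : ∀ c : ℝ, 0 < c →
      (S * cj V s).trace + γ / 2 * (S.trace + (cj V xh).trace - 2 * (msqrt M).trace)
        ≥ (∑ i, (s i) ^ 2) + γ / 2 * (∑ i, (Real.sqrt (xh i) - Real.sqrt (s i)) ^ 2)
          - (p : ℝ) * (γ / (2 * c)) := by
    intro c hc
    set n : Fin p → ℝ := fun i => if xh i = 0 then c else (2 * s i + γ) / (γ * (xh i))
      with hn_def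
    have hn : ∀ i, 0 < n i := by
      intro i
      simp only [hn_def]
      split_ifs with h
      · exact hc
      · have hxi : 0 < xh i := lt_of_le_of_ne (hx i) (Ne.symm h)
        have : 0 < 2 * s i + γ := by have := hs0 i; linarith
        positivity
    set P : Mat p := cj V (fun i => Real.sqrt (n i)) with hP_def
    set P' : Mat p := cj V (fun i => (Real.sqrt (n i))⁻¹) with hP'_def
    have hPt : Pᵀ = P := cj_transpose _
    have hP't : P'ᵀ = P' := cj_transpose _
    have hPP' : P * P' = 1 := by
      rw [hP_def, hP'_def, cj_mul hV]
      have : (fun i => Real.sqrt (n i) * (Real.sqrt (n i))⁻¹) = fun _ => (1:ℝ) := by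
        funext i
        exact mul_inv_cancel₀ (Real.sqrt_pos.2 (hn i)).ne'
      rw [this, cj_one hV]
    have hTS := traceSqrt_le hMpsd hPt hP't hPP'
    -- compute the two trace terms
    have hPP : P * P = cj V n := by
      rw [hP_def, cj_mul hV]
      have h2 : (fun i => Real.sqrt (n i) * Real.sqrt (n i)) = n :=
        funext fun i => Real.mul_self_sqrt (hn i).le
      rw [h2]
    set m : Fin p → ℝ := fun i => Real.sqrt (xh i) * n i * Real.sqrt (xh i) with hm_def
    have hQnQ : Q * cj V n * Q = cj V m := by
      rw [hQ, cj_mul hV, cj_mul hV]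
    have hMn : (M * (P * P)).trace = (S * cj V m).trace := by
      rw [hPP, hM_def]
      rw [show Q * S * Q * cj V n = (Q * S) * (Q * cj V n) from by noncomm_ring]
      rw [Matrix.trace_mul_comm]
      rw [show Q * cj V n * (Q * S) = (Q * cj V n * Q) * S from by noncomm_ring]
      rw [hQnQ, Matrix.trace_mul_comm]
    have hP'P' : (P' * P').trace = ∑ i, (n i)⁻¹ := by
      rw [hP'_def, cj_mul hV, cj_trace hV]
      apply Finset.sum_congr rfl
      intro i _
      rw [← Real.sqrt_inv]
      exact Real.mul_self_sqrt (inv_nonneg.2 (hn i).le)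
    -- the residual diagonal matrix T
    set r : Fin p → ℝ := fun i => s i + γ / 2 - γ / 2 * m i with hr_def
    have hr : ∀ i, 0 ≤ r i := by
      intro i
      simp only [hr_def, hm_def]
      rcases eq_or_lt_of_le (hx i) with h | h
      · rw [hszero i h.symm, ← h]
        simp only [Real.sqrt_zero, mul_zero, zero_mul, sub_zero, zero_add]
        positivity
      · have hxi : xh i ≠ 0 := h.ne'
        have : Real.sqrt (xh i) * n i * Real.sqrt (xh i) = (2 * s i + γ) / γ := by
          simp only [hn_def, if_neg hxi]
          rw [show Real.sqrt (xh i) * ((2 * s i + γ) / (γ * xh i)) * Real.sqrt (xh i)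
              = Real.sqrt (xh i) * Real.sqrt (xh i) * ((2 * s i + γ) / (γ * xh i)) from by ring,
            Real.mul_self_sqrt (hx i)]
          field_simp
        rw [this]
        have h9 : γ / 2 * ((2 * s i + γ) / γ) = s i + γ / 2 := by
          field_simp
        rw [h9]
        simp
    have hT : (S * cj V r).trace ≥ 0 := trace_mul_psd_nonneg hS (cj_psd hr)
    -- linear identity
    have hlin : (S * cj V r).trace
        = (S * cj V s).trace + γ / 2 * S.trace - γ / 2 * (S * cj V m).trace := by
      have h1 : cj V r = cj V s + (γ/2) • (1 : Mat p) - (γ/2) • cj V m := by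
        rw [show (γ/2) • (1 : Mat p) = (γ/2) • cj V (fun _ => 1) from by rw [cj_one hV],
          cj_smul, cj_smul, cj_add, cj_sub]
        rw [show (fun i => s i + γ / 2 * 1 - γ / 2 * m i) = r from by
          funext i; simp [hr_def]]
      rw [h1, Matrix.mul_sub, Matrix.mul_add, Matrix.trace_sub, Matrix.trace_add,
        mul_smul_comm, mul_smul_comm, Matrix.trace_smul, Matrix.trace_smul,
        Matrix.mul_one, smul_eq_mul, smul_eq_mul]
    -- per-coordinate inequality
    have hper : ∀ i, γ / 2 * (xh i - (n i)⁻¹)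
        ≥ (s i) ^ 2 + γ / 2 * (Real.sqrt (xh i) - Real.sqrt (s i)) ^ 2 - γ / (2 * c) := by
      intro i
      rcases eq_or_lt_of_le (hx i) with h | h
      · have hsz := hszero i h.symm
        simp only [hn_def, if_pos h.symm, ← h, hsz]
        have h9 : γ / 2 * (0 - c⁻¹) = - (γ / (2 * c)) := by ring
        rw [h9]
        simp
      · have hxi : xh i ≠ 0 := h.ne'
        have hni : (n i)⁻¹ = γ * xh i / (2 * s i + γ) := by
          simp only [hn_def, if_neg hxi]
          rw [inv_div]
        have heq := scalar_eq hγ h (hs0 i) (hskey i h)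
        rw [hni]
        have : 0 < γ / (2 * c) := by positivity
        linarith [heq]
    -- summation
    have hsum : ∑ i, (γ / 2 * (xh i - (n i)⁻¹))
        ≥ (∑ i, (s i) ^ 2) + γ / 2 * (∑ i, (Real.sqrt (xh i) - Real.sqrt (s i)) ^ 2)
          - (p : ℝ) * (γ / (2 * c)) := by
      have h1 := Finset.sum_le_sum (fun i (_ : i ∈ Finset.univ) => hper i)
      have h2 : ∑ i : Fin p, ((s i) ^ 2 + γ / 2 * (Real.sqrt (xh i) - Real.sqrt (s i)) ^ 2
            - γ / (2 * c))
          = (∑ i, (s i) ^ 2) + γ / 2 * (∑ i, (Real.sqrt (xh i) - Real.sqrt (s i)) ^ 2)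
            - (p : ℝ) * (γ / (2 * c)) := by
        rw [Finset.sum_sub_distrib, Finset.sum_add_distrib, ← Finset.mul_sum]
        simp only [Finset.sum_const, Finset.card_univ, Fintype.card_fin, nsmul_eq_mul]
      rw [h2] at h1
      exact h1
    have hsum2 : ∑ i, (γ / 2 * (xh i - (n i)⁻¹))
        = γ / 2 * ((cj V xh).trace - ∑ i, (n i)⁻¹) := by
      rw [cj_trace hV, ← Finset.sum_sub_distrib, Finset.mul_sum]
    -- combine everything
    have hTS' : - 2 * γ / 2 * (msqrt M).trace
        ≥ - γ / 2 * ((S * cj V m).trace + ∑ i, (n i)⁻¹) := by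
      rw [hMn, hP'P'] at hTS
      nlinarith [hTS]
    nlinarith [hT, hlin, hsum, hsum2, hTS']
  -- now let `c → ∞`
  have hfinal : (S * cj V s).trace
      + γ / 2 * (S.trace + (cj V xh).trace - 2 * (msqrt M).trace)
      ≥ (∑ i, (s i) ^ 2) + γ / 2 * ε := by
    rw [hε]
    by_contra hcon
    push_neg at hcon
    set δ := (∑ i, (s i) ^ 2) + γ / 2 * (∑ i, (Real.sqrt (xh i) - Real.sqrt (s i)) ^ 2)
      - ((S * cj V s).trace + γ / 2 * (S.trace + (cj V xh).trace - 2 * (msqrt M).trace))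
      with hδ_def
    have hδ : 0 < δ := by simp only [hδ_def]; linarith
    have hc : (0:ℝ) < (p : ℝ) * γ / (2 * δ) + 1 := by positivity
    have hst := hstep _ hc
    have hlt : (p : ℝ) * (γ / (2 * ((p : ℝ) * γ / (2 * δ) + 1))) < δ := by
      have hC : (0:ℝ) < 2 * ((p : ℝ) * γ / (2 * δ) + 1) := by positivity
      have h1 : (p : ℝ) * (γ / (2 * ((p : ℝ) * γ / (2 * δ) + 1)))
          = (p : ℝ) * γ / (2 * ((p : ℝ) * γ / (2 * δ) + 1)) := by ring
      rw [h1, div_lt_iff₀ hC]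
      have h2 : δ * (2 * ((p : ℝ) * γ / (2 * δ) + 1)) = (p : ℝ) * γ + 2 * δ := by
        field_simp
      rw [h2]
      linarith
    simp only [hδ_def] at hlt
    linarith [hst]
  -- conclude using feasibility
  have h1 : γ / 2 * (S.trace + (cj V xh).trace - 2 * (msqrt M).trace) ≤ γ / 2 * ε := by
    apply mul_le_mul_of_nonneg_left _ (by positivity : (0:ℝ) ≤ γ / 2)
    exact hDW
  rw [hXX]
  linarith [hfinal]

end VI

section Assemble

variable {p : ℕ} {V : Mat p} {xh a : Fin p → ℝ} {γ ε : ℝ}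

lemma psd_transpose_eq {A : Mat p} (hA : A.PosSemidef) : Aᵀ = A := by
  have := hA.isHermitian.eq
  rwa [Matrix.conjTranspose_eq_transpose_of_trivial] at this

lemma loss_lower {A B : Mat p} (hA : Aᵀ = A) (hB : Bᵀ = B) :
    0 ≤ (A * A).trace - 2 * (B * A).trace + (B * B).trace := by
  have h := frob_nonneg (A - B)
  rw [Matrix.transpose_sub, hA, hB] at h
  have hexp : (A - B) * (A - B) = A * A - A * B - B * A + B * B := by noncomm_ring
  rw [hexp, Matrix.trace_add, Matrix.trace_sub, Matrix.trace_sub,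
    Matrix.trace_mul_comm A B] at h
  linarith

lemma loss_eq {A B : Mat p} (hA : Aᵀ = A) (hB : Bᵀ = B)
    (h : (A * A).trace - 2 * (B * A).trace + (B * B).trace ≤ 0) : A = B := by
  have hexp : (A - B) * (A - B) = A * A - A * B - B * A + B * B := by noncomm_ring
  have h2 : ((A - B)ᵀ * (A - B)).trace ≤ 0 := by
    rw [Matrix.transpose_sub, hA, hB, hexp, Matrix.trace_add, Matrix.trace_sub,
      Matrix.trace_sub, Matrix.trace_mul_comm A B]
    linarith
  have := frob_eq_zero h2
  rwa [sub_eq_zero] at this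

/-- Value of the Wasserstein divergence on a common eigenbasis. -/
lemma DW_cj (hV : IsOrthoMat V) (ha : ∀ i, 0 ≤ a i) (hx : ∀ i, 0 ≤ xh i) :
    DW (cj V a) (cj V xh)
      = ((∑ i, (Real.sqrt (a i) - Real.sqrt (xh i)) ^ 2 : ℝ) : EReal) := by
  rw [DW, if_pos ⟨cj_psd ha, cj_psd hx⟩]
  congr 1
  rw [msqrt_cj hV hx, cj_mul hV, cj_mul hV]
  have hinner : ∀ i, 0 ≤ Real.sqrt (xh i) * a i * Real.sqrt (xh i) := fun i =>
    mul_nonneg (mul_nonneg (Real.sqrt_nonneg _) (ha i)) (Real.sqrt_nonneg _)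
  rw [msqrt_cj hV hinner, cj_trace hV, cj_trace hV, cj_trace hV]
  have hterm : ∀ i, Real.sqrt (Real.sqrt (xh i) * a i * Real.sqrt (xh i))
      = Real.sqrt (a i) * Real.sqrt (xh i) := by
    intro i
    rw [show Real.sqrt (xh i) * a i * Real.sqrt (xh i)
        = a i * (Real.sqrt (xh i) * Real.sqrt (xh i)) from by ring,
      Real.mul_self_sqrt (hx i), Real.sqrt_mul (ha i)]
  rw [show (∑ i, Real.sqrt (Real.sqrt (xh i) * a i * Real.sqrt (xh i)))
      = ∑ i, Real.sqrt (a i) * Real.sqrt (xh i) from Finset.sum_congr rfl fun i _ => hterm i]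
  rw [← Finset.sum_add_distrib, Finset.mul_sum, ← Finset.sum_sub_distrib]
  apply Finset.sum_congr rfl
  intro i _
  have h1 := Real.sq_sqrt (ha i)
  have h2 := Real.sq_sqrt (hx i)
  linear_combination -h1 - h2

end Assemble


/-- Corollary: Wasserstein covariance shrinkage estimator.
For the Wasserstein divergence with `Σ̂ ⪰ 0` and `ε ∈ (0, Tr Σ̂)`, (CSE) is uniquely
solved by `X* = V̂ Diag(s(γ*,x̂ᵢ)) V̂ᵀ`, where for `γ,b > 0` the closed form `s(γ,b)`
is the unique positive `a` with `2a + γ(1 − √(b/a)) = 0` and lies in `(0,b)`, and `γ*`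
is the unique positive solution of `ε − Σᵢ(√x̂ᵢ − √s(γ*,x̂ᵢ))² = 0`; moreover
`γ* ≤ γ_W = 2√(p·x̂ₚ³/ε)`. -/
theorem stmt_16 {p : ℕ} (hp : 0 < p)
    (Sh : Mat p) (xh : Fin p → ℝ) (Vh : Mat p) (ε : ℝ)
    (hSh : Sh.PosSemidef) (hmono : Monotone xh) (hV : IsOrthoMat Vh)
    (hdec : Sh = Vh * Matrix.diagonal xh * Vhᵀ)
    (hε : 0 < ε) (hε' : ε < Sh.trace) :
    (∀ γ b : ℝ, 0 < γ → 0 < b →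
      sW γ b ∈ Set.Ioo 0 b ∧ 2 * sW γ b + γ * (1 - Real.sqrt (b / sW γ b)) = 0 ∧
      ∀ a : ℝ, 0 < a → 2 * a + γ * (1 - Real.sqrt (b / a)) = 0 → a = sW γ b) ∧
    (∃! γ : ℝ, 0 < γ ∧
      ε - ∑ i, (Real.sqrt (xh i) - Real.sqrt (sW γ (xh i))) ^ 2 = 0) ∧
    (∀ γs : ℝ, 0 < γs →
      ε - ∑ i, (Real.sqrt (xh i) - Real.sqrt (sW γs (xh i))) ^ 2 = 0 →
      γs ≤ 2 * Real.sqrt ((p : ℝ) * (xh ⟨p - 1, Nat.sub_lt hp Nat.one_pos⟩) ^ 3 / ε) ∧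
      IsCSESol DW Sh ε (Vh * Matrix.diagonal (fun i => sW γs (xh i)) * Vhᵀ) ∧
      ∀ X : Mat p, IsCSESol DW Sh ε X →
        X = Vh * Matrix.diagonal (fun i => sW γs (xh i)) * Vhᵀ) := by
  
  have hdec' : Sh = cj Vh xh := hdec
  have hx : ∀ i, 0 ≤ xh i := by
    have hD : (Matrix.diagonal xh).PosSemidef := by
      have h1 := hSh.conjTranspose_mul_mul_same Vh
      rw [Matrix.conjTranspose_eq_transpose_of_trivial] at h1
      have h2 : Vhᵀ * Sh * Vh = Matrix.diagonal xh := by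
        rw [hdec]
        calc Vhᵀ * (Vh * Matrix.diagonal xh * Vhᵀ) * Vh
            = (Vhᵀ * Vh) * (Matrix.diagonal xh * (Vhᵀ * Vh)) := by
              simp only [Matrix.mul_assoc]
        _ = Matrix.diagonal xh := by
              rw [ortho_tV hV, Matrix.mul_one, Matrix.one_mul]
      rwa [h2] at h1
    exact Matrix.posSemidef_diagonal_iff.mp hD
  have htr : Sh.trace = ∑ i, xh i := by rw [hdec']; exact cj_trace hV xh
  have hsum : ε < ∑ i, xh i := htr ▸ hε'
  refine ⟨?_, gamma_exists_unique hx hε hsum, ?_⟩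
  · intro γ b hγ hb
    obtain ⟨hpos, -⟩ := sW_key hγ hb
    exact ⟨⟨hpos, sW_lt hγ hb⟩, sW_eq hγ hb, fun a ha heqa => sW_unique hγ hb ha heqa⟩
  · intro γs hγs heq
    have hs0 : ∀ i, 0 ≤ sW γs (xh i) := fun i => sW_nonneg _ _
    have hεsum : ε = ∑ i, (Real.sqrt (xh i) - Real.sqrt (sW γs (xh i))) ^ 2 := by
      linarith [heq]
    refine ⟨?_, ?_, ?_⟩
    · -- the bound γs ≤ γ_W
      set B := xh ⟨p - 1, Nat.sub_lt hp Nat.one_pos⟩ with hB_def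
      have hBmax : ∀ i, xh i ≤ B := by
        intro i
        apply hmono
        have := i.isLt
        exact Fin.mk_le_mk.mpr (by omega) |>.trans_eq rfl
      have hB0 : 0 ≤ B := hx _
      have hterm : ∀ i, (Real.sqrt (xh i) - Real.sqrt (sW γs (xh i))) ^ 2
          ≤ 4 * B ^ 3 / γs ^ 2 := by
        intro i
        rcases eq_or_lt_of_le (hx i) with h | h
        · rw [gFun_term_zero hγs h.symm]
          positivity
        · rw [sW_diff_sq hγs h]
          have h1 : (sW γs (xh i)) ^ 3 ≤ B ^ 3 :=
            pow_le_pow_left₀ (sW_nonneg _ _) ((sW_lt hγs h).le.trans (hBmax i)) 3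
          gcongr
      have hle : ε ≤ (p : ℝ) * (4 * B ^ 3 / γs ^ 2) := by
        rw [hεsum]
        have := Finset.sum_le_card_nsmul Finset.univ _ _ (fun i (_ : i ∈ Finset.univ) => hterm i)
        simpa [Finset.card_univ, nsmul_eq_mul] using this
      have hγsq : γs ^ 2 ≤ 4 * ((p : ℝ) * B ^ 3 / ε) := by
        have h1 : ε * γs ^ 2 ≤ (p : ℝ) * (4 * B ^ 3) := by
          have h2 := mul_le_mul_of_nonneg_right hle (sq_nonneg γs)
          have h3 : (p : ℝ) * (4 * B ^ 3 / γs ^ 2) * γs ^ 2 = (p : ℝ) * (4 * B ^ 3) := by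
            field_simp
          linarith [h3 ▸ h2]
        rw [show (4:ℝ) * ((p : ℝ) * B ^ 3 / ε) = ((p : ℝ) * (4 * B ^ 3)) / ε from by ring,
          le_div_iff₀ hε]
        nlinarith [h1]
      calc γs = Real.sqrt (γs ^ 2) := (Real.sqrt_sq hγs.le).symm
      _ ≤ Real.sqrt (4 * ((p : ℝ) * B ^ 3 / ε)) := Real.sqrt_le_sqrt hγsq
      _ = 2 * Real.sqrt ((p : ℝ) * B ^ 3 / ε) := by
            rw [show (4 : ℝ) * ((p : ℝ) * B ^ 3 / ε) = 2 ^ 2 * ((p : ℝ) * B ^ 3 / ε) from by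
              norm_num, Real.sqrt_mul (by positivity), Real.sqrt_sq (by norm_num)]
    all_goals {
      have hXspsd : (cj Vh (fun i => sW γs (xh i))).PosSemidef := cj_psd hs0
      have hfeas : Feas DW Sh ε (cj Vh (fun i => sW γs (xh i))) := by
        refine ⟨hXspsd, ?_⟩
        rw [hdec', DW_cj hV hs0 hx]
        have h5 : ∑ i, (Real.sqrt (sW γs (xh i)) - Real.sqrt (xh i)) ^ 2 = ε := by
          rw [hεsum]
          apply Finset.sum_congr rfl
          intro i _
          ring
        rw [h5]
      have hVI : ∀ S : Mat p, Feas DW Sh ε S →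
          ((cj Vh (fun i => sW γs (xh i))) * (cj Vh (fun i => sW γs (xh i)))).trace
            ≤ (S * cj Vh (fun i => sW γs (xh i))).trace := by
        intro S hS
        apply variational_ineq hV hx hγs hεsum hS.1
        have h1 := hS.2
        rw [hdec', DW, if_pos ⟨hS.1, cj_psd hx⟩] at h1
        exact EReal.coe_le_coe_iff.mp h1
      have hup : primalVal DW Sh ε (cj Vh (fun i => sW γs (xh i)))
          ≤ ((-((cj Vh (fun i => sW γs (xh i)) * cj Vh (fun i => sW γs (xh i))).trace) : ℝ)
            : EReal) := by
        apply iSup_le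
        rintro ⟨S, hS⟩
        apply EReal.coe_le_coe_iff.mpr
        have h6 := hVI S hS
        show cseLoss _ S ≤ _
        rw [cseLoss]
        linarith [h6]
      have hlowY : ∀ Y : Mat p, Y.PosSemidef →
          ((-((cj Vh (fun i => sW γs (xh i)) * cj Vh (fun i => sW γs (xh i))).trace) : ℝ)
            : EReal) ≤ primalVal DW Sh ε Y := by
        intro Y hY
        have h3 : -((cj Vh (fun i => sW γs (xh i)) * cj Vh (fun i => sW γs (xh i))).trace)
            ≤ cseLoss Y (cj Vh (fun i => sW γs (xh i))) := by
          have h7 := loss_lower (psd_transpose_eq hY) (psd_transpose_eq hXspsd)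
          rw [cseLoss]
          linarith [h7]
        calc ((-((cj Vh (fun i => sW γs (xh i)) * cj Vh (fun i => sW γs (xh i))).trace) : ℝ)
            : EReal) ≤ ((cseLoss Y (cj Vh (fun i => sW γs (xh i))) : ℝ) : EReal) :=
              EReal.coe_le_coe_iff.mpr h3
        _ ≤ primalVal DW Sh ε Y :=
              le_iSup (fun S : {S // Feas DW Sh ε S} => ((cseLoss Y S.1 : ℝ) : EReal))
                ⟨_, hfeas⟩
      first
      | -- IsCSESol
        (exact ⟨hXspsd, fun Y hY => le_trans hup (hlowY Y hY)⟩)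
      | -- uniqueness
        (intro X hX
         have h1 : primalVal DW Sh ε X ≤ primalVal DW Sh ε (cj Vh (fun i => sW γs (xh i))) :=
           hX.2 _ hXspsd
         have h2 : ((cseLoss X (cj Vh (fun i => sW γs (xh i))) : ℝ) : EReal)
             ≤ primalVal DW Sh ε X :=
           le_iSup (fun S : {S // Feas DW Sh ε S} => ((cseLoss X S.1 : ℝ) : EReal)) ⟨_, hfeas⟩
         have h4 : cseLoss X (cj Vh (fun i => sW γs (xh i)))
             ≤ -((cj Vh (fun i => sW γs (xh i)) * cj Vh (fun i => sW γs (xh i))).trace) :=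
           EReal.coe_le_coe_iff.mp (le_trans h2 (le_trans h1 hup))
         apply loss_eq (psd_transpose_eq hX.1) (psd_transpose_eq hXspsd)
         rw [cseLoss] at h4
         linarith [h4])
    }
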